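/- Asymmetry witnesses lower-bound the robustness of asymmetry: let W be a Hermitian d×d complex matrix such that I − W is positive semidefinite and such that Tr[Wσ] ≥ 0 for every symmetric state σ. Then for every state ρ, max{0, −Re Tr[Wρ]} ≤ RoA(ρ). -/

import Mathlib

open Matrix ComplexOrder

noncomputable section

/-- A state (density matrix): positive semidefinite with trace 1. -/
def IsState {d : ℕ} (ρ : Matrix (Fin d) (Fin d) ℂ) : Prop :=
  ρ.PosSemidef ∧ ρ.trace = 1

/-- Group average of a matrix under a unitary representation. -/
def grpAvg {d : ℕ} {G : Type*} [Fintype G] [Group G]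
    (U : G →* Matrix.unitaryGroup (Fin d) ℂ) (X : Matrix (Fin d) (Fin d) ℂ) :
    Matrix (Fin d) (Fin d) ℂ :=
  (Fintype.card G : ℂ)⁻¹ •
    ∑ g : G, (U g : Matrix (Fin d) (Fin d) ℂ) * X * ((U g : Matrix (Fin d) (Fin d) ℂ))ᴴ

/-- The robustness of asymmetry. -/
def RoA {d : ℕ} {G : Type*} [Fintype G] [Group G]
    (U : G →* Matrix.unitaryGroup (Fin d) ℂ) (ρ : Matrix (Fin d) (Fin d) ℂ) : ℝ :=
  sInf { s : ℝ | 0 ≤ s ∧ ∃ σ : Matrix (Fin d) (Fin d) ℂ,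
    IsState σ ∧ grpAvg U σ = σ ∧ ((1 + s) • σ - ρ).PosSemidef }


lemma trace_re_nonneg' {d : ℕ} {A : Matrix (Fin d) (Fin d) ℂ} (hA : A.PosSemidef) :
    0 ≤ A.trace.re := by
  have h : ∀ i, 0 ≤ (A i i).re := by
    intro i
    have := hA.re_dotProduct_nonneg (Pi.single i 1)
    simpa [Matrix.mulVec_single, dotProduct, Pi.single_apply, apply_ite (star : ℂ → ℂ)] using this
  simp only [Matrix.trace, Matrix.diag, Complex.re_sum]
  exact Finset.sum_nonneg fun i _ => h i

lemma trace_mul_re_nonneg' {d : ℕ} {A B : Matrix (Fin d) (Fin d) ℂ}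
    (hA : A.PosSemidef) (hB : B.PosSemidef) : 0 ≤ (A * B).trace.re := by
  obtain ⟨C, rfl⟩ : ∃ C : Matrix (Fin d) (Fin d) ℂ, B = Cᴴ * C := by
    open scoped MatrixOrder in
    obtain ⟨C, rfl⟩ := CStarAlgebra.nonneg_iff_eq_star_mul_self.mp hB.nonneg
    exact ⟨C, rfl⟩
  have h : (A * (Cᴴ * C)).trace = (C * A * Cᴴ).trace := by
    rw [← mul_assoc, Matrix.trace_mul_comm, ← mul_assoc]
  rw [h]
  exact trace_re_nonneg' (hA.mul_mul_conjTranspose_same C)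

lemma one_sub_state_posSemidef {d : ℕ} {ρ : Matrix (Fin d) (Fin d) ℂ}
    (hpsd : ρ.PosSemidef) (htr : ρ.trace = 1) :
    ((1 : Matrix (Fin d) (Fin d) ℂ) - ρ).PosSemidef := by
  have hH := hpsd.isHermitian
  set u : Matrix (Fin d) (Fin d) ℂ := (hH.eigenvectorUnitary : Matrix (Fin d) (Fin d) ℂ) with hu
  have huu : u * star u = 1 := (Matrix.mem_unitaryGroup_iff).mp hH.eigenvectorUnitary.2
  have hsumC : ∑ i, (hH.eigenvalues i : ℂ) = 1 := by
    have h1 : ρ.trace = (Matrix.diagonal (RCLike.ofReal ∘ hH.eigenvalues) : Matrix (Fin d) (Fin d) ℂ).trace := by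
      conv_lhs => rw [hH.spectral_theorem, Unitary.conjStarAlgAut_apply]
      rw [Matrix.trace_mul_comm, ← mul_assoc]
      have h2 : star u * u = 1 := (Matrix.mem_unitaryGroup_iff').mp hH.eigenvectorUnitary.2
      rw [h2, one_mul]
    rw [htr] at h1
    simpa [Matrix.trace_diagonal] using h1.symm
  have hsum : ∑ i, hH.eigenvalues i = 1 := by
    have := congrArg Complex.re hsumC
    simpa [Complex.re_sum] using this
  have hle : ∀ i, hH.eigenvalues i ≤ 1 := by
    intro i
    rw [← hsum]
    exact Finset.single_le_sum (fun j _ => hpsd.eigenvalues_nonneg j) (Finset.mem_univ i)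
  have hdiag : (1 : Matrix (Fin d) (Fin d) ℂ) - Matrix.diagonal (RCLike.ofReal ∘ hH.eigenvalues)
      = Matrix.diagonal (fun i => ((1 - hH.eigenvalues i : ℝ) : ℂ)) := by
    ext i j
    by_cases h : i = j
    · subst h; simp [Matrix.one_apply_eq]
    · simp [Matrix.diagonal_apply_ne _ h, Matrix.one_apply_ne h]
  have hkey : (1 : Matrix (Fin d) (Fin d) ℂ) - ρ
      = u * Matrix.diagonal (fun i => ((1 - hH.eigenvalues i : ℝ) : ℂ)) * star u := by
    conv_lhs => rw [← huu, hH.spectral_theorem]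
    calc u * star u - u * Matrix.diagonal (RCLike.ofReal ∘ hH.eigenvalues) * star u
        = u * ((1 : Matrix (Fin d) (Fin d) ℂ) - Matrix.diagonal (RCLike.ofReal ∘ hH.eigenvalues)) * star u := by
          rw [Matrix.mul_sub, Matrix.sub_mul, Matrix.mul_one]
      _ = u * Matrix.diagonal (fun i => ((1 - hH.eigenvalues i : ℝ) : ℂ)) * star u := by rw [hdiag]
  rw [hkey, Matrix.star_eq_conjTranspose]
  refine (Matrix.posSemidef_diagonal_iff.mpr ?_).mul_mul_conjTranspose_same u
  intro i
  rw [Complex.zero_le_real]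
  linarith [hle i]

lemma grpAvg_smul_one' {d : ℕ} {G : Type*} [Fintype G] [Group G]
    (U : G →* Matrix.unitaryGroup (Fin d) ℂ) (c : ℂ) :
    grpAvg U (c • (1 : Matrix (Fin d) (Fin d) ℂ)) = c • 1 := by
  unfold grpAvg
  have h : ∀ g : G, (U g : Matrix (Fin d) (Fin d) ℂ) * (c • 1) *
      ((U g : Matrix (Fin d) (Fin d) ℂ))ᴴ = c • 1 := by
    intro g
    have hg := (Matrix.mem_unitaryGroup_iff).mp (U g).2
    rw [Matrix.mul_smul, Matrix.mul_one, Matrix.smul_mul, ← Matrix.star_eq_conjTranspose, hg]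
  simp only [h, Finset.sum_const, Finset.card_univ]
  rw [← Nat.cast_smul_eq_nsmul ℂ, smul_smul,
    inv_mul_cancel₀ (Nat.cast_ne_zero.mpr Fintype.card_ne_zero), one_smul]


theorem roa_witness_lower_bound {d : ℕ} (hd : 1 ≤ d) {G : Type*} [Fintype G] [Group G]
    (U : G →* Matrix.unitaryGroup (Fin d) ℂ)
    (W : Matrix (Fin d) (Fin d) ℂ) (hW : W.IsHermitian)
    (hWle : ((1 : Matrix (Fin d) (Fin d) ℂ) - W).PosSemidef)
    (hwit : ∀ σ : Matrix (Fin d) (Fin d) ℂ, IsState σ → grpAvg U σ = σ →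
      0 ≤ (W * σ).trace.re)
    (ρ : Matrix (Fin d) (Fin d) ℂ) (hρ : IsState ρ) :
    max 0 (-(W * ρ).trace.re) ≤ RoA U ρ := by
  have hdC : (d : ℂ) ≠ 0 := Nat.cast_ne_zero.mpr (by omega)
  have hd1 : (1:ℝ) ≤ (d:ℝ) := by exact_mod_cast hd
  apply le_csInf
  · refine ⟨(d:ℝ) - 1, by linarith, (d:ℂ)⁻¹ • 1, ⟨?_, ?_⟩, grpAvg_smul_one' U _, ?_⟩
    · have : ((d:ℂ)⁻¹ • (1 : Matrix (Fin d) (Fin d) ℂ))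
          = Matrix.diagonal (fun _ => (d:ℂ)⁻¹) := by
        ext i j
        by_cases h : i = j
        · subst h; simp
        · simp [Matrix.one_apply_ne h, Matrix.diagonal_apply_ne _ h]
      rw [this]
      refine Matrix.PosSemidef.diagonal fun i => ?_
      show (0:ℂ) ≤ (d:ℂ)⁻¹
      have h2 : ((d:ℂ))⁻¹ = ((((d:ℝ)⁻¹ : ℝ)) : ℂ) := by
        rw [Complex.ofReal_inv, Complex.ofReal_natCast]
      rw [h2, Complex.zero_le_real]
      positivity
    · rw [Matrix.trace_smul, Matrix.trace_one]
      simp [hdC]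
    · have h1 : (1 + ((d:ℝ) - 1)) • ((d:ℂ)⁻¹ • (1 : Matrix (Fin d) (Fin d) ℂ))
          = (1 : Matrix (Fin d) (Fin d) ℂ) := by
        rw [← smul_assoc]
        have : (1 + ((d:ℝ) - 1)) • ((d:ℂ)⁻¹) = (1:ℂ) := by
          rw [Complex.real_smul]
          push_cast
          field_simp
          ring
        rw [this, one_smul]
      rw [h1]
      exact one_sub_state_posSemidef hρ.1 hρ.2
  · rintro b ⟨hb0, σ, ⟨hσpsd, hσtr⟩, hσsym, hX⟩
    refine max_le hb0 ?_
    rw [neg_le]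
    have hw := hwit σ ⟨hσpsd, hσtr⟩ hσsym
    have h1 : 0 ≤ (((1 : Matrix (Fin d) (Fin d) ℂ) - W) * ((1 + b) • σ - ρ)).trace.re :=
      trace_mul_re_nonneg' hWle hX
    have hexp : (((1 : Matrix (Fin d) (Fin d) ℂ) - W) * ((1 + b) • σ - ρ)).trace
        = (1 + b) • σ.trace - ρ.trace - ((1 + b) • (W * σ).trace - (W * ρ).trace) := by
      simp only [Matrix.sub_mul, Matrix.mul_sub, Matrix.one_mul, Matrix.mul_smul,
        Matrix.trace_sub, Matrix.trace_smul, smul_sub]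
      abel
    rw [hexp, hσtr, hρ.2] at h1
    have hre : ∀ (r : ℝ) (z : ℂ), (r • z).re = r * z.re := by
      intro r z; rw [Complex.real_smul, Complex.re_ofReal_mul]
    simp only [Complex.sub_re, hre, Complex.one_re] at h1
    nlinarith [mul_nonneg (by linarith : (0:ℝ) ≤ 1 + b) hw]
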